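/- Let (Ω, 𝓕, P) be a probability space with a filtration (𝓕_i)_{i∈ℕ}, and let (W_i)_{i∈ℕ} be an adapted sequence of nonnegative integrable random variables. Let C > 1 and assume that for every i ≥ 1, E[W_i | 𝓕_{i−1}] ≤ (1 − 1/C) W_{i−1} + C almost surely. Set C₁ = C(2C + 2), η = 2/(2 − 1/C), and C₃ = 1 + C² + (C − 1)C₁. Assume W_0 ≤ C₁ almost surely. Then for every integer d ≥ 1, the delayed hitting time ρ_d = inf{ i ≥ d : W_i ≤ C₁ } satisfies E[η^{ρ_d}] ≤ C₃ η^d. -/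

import Mathlib

open MeasureTheory Classical

set_option maxHeartbeats 2000000 in
/-- Part 2 of Lemma "annex": for an adapted nonnegative process satisfying the
Foster–Lyapunov drift condition with constants `(1 - 1/C, C)` and started in
the sublevel set `{W ≤ C₁}` with `C₁ = C(2C+2)`, the `d`-delayed return time
`ρ_d = inf{i ≥ d : W_i ≤ C₁}` satisfies `E[η^{ρ_d}] ≤ C₃ η^d` with
`η = 2/(2 - 1/C)` and `C₃ = 1 + C² + (C-1)C₁` (the integrand is `∞` when
`ρ_d = ∞`). -/
theorem delayed_return_time_exp_moment {Ω : Type*} {m0 : MeasurableSpace Ω}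
    (μ : Measure Ω) [IsProbabilityMeasure μ]
    (𝓕 : Filtration ℕ m0) (W : ℕ → Ω → ℝ)
    (hadapt : Adapted 𝓕 W) (hnonneg : ∀ i ω, 0 ≤ W i ω)
    (hint : ∀ i, Integrable (W i) μ)
    (C : ℝ) (hC : 1 < C)
    (hdrift : ∀ i : ℕ, 1 ≤ i →
      ∀ᵐ ω ∂μ, (μ[W i | 𝓕 (i - 1)]) ω ≤ (1 - 1 / C) * W (i - 1) ω + C)
    (hW0 : ∀ᵐ ω ∂μ, W 0 ω ≤ C * (2 * C + 2))
    (d : ℕ) (hd : 1 ≤ d) :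
    (∫⁻ ω, (if {i : ℕ | d ≤ i ∧ W i ω ≤ C * (2 * C + 2)}.Nonempty
        then ENNReal.ofReal
          ((2 / (2 - 1 / C)) ^ sInf {i : ℕ | d ≤ i ∧ W i ω ≤ C * (2 * C + 2)})
        else ⊤) ∂μ) ≤
      ENNReal.ofReal ((1 + C ^ 2 + (C - 1) * (C * (2 * C + 2))) *
        (2 / (2 - 1 / C)) ^ d) := by
  have hC0 : (0:ℝ) < C := lt_trans one_pos hC
  set C₁ : ℝ := C * (2 * C + 2) with hC₁def
  set η : ℝ := 2 / (2 - 1 / C) with hηdef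
  set α : ℝ := 1 - 1 / C with hαdef
  have hCinv1 : 1 / C < 1 := by rw [div_lt_one hC0]; exact hC
  have hCinv0 : 0 < 1 / C := by positivity
  have hden : 0 < 2 - 1 / C := by linarith
  have hη1 : 1 < η := by rw [hηdef, lt_div_iff₀ hden]; linarith
  have hηpos : 0 < η := lt_trans one_pos hη1
  have hα0 : 0 ≤ α := by rw [hαdef]; linarith
  have hα1 : α < 1 := by rw [hαdef]; linarith
  have hC₁pos : 0 < C₁ := by rw [hC₁def]; nlinarith
  have hηeq : η * (2 * C - 1) = 2 * C := by
    rw [hηdef, div_mul_eq_mul_div, div_eq_iff (ne_of_gt hden)]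
    field_simp
  have hαC : α * C = C - 1 := by rw [hαdef]; field_simp
  -- pointwise drift consequence outside the sublevel set
  have hpoint : ∀ w : ℝ, C₁ ≤ w → α * w + C ≤ w / η - 1 := by
    intro w hw
    rw [le_sub_iff_add_le, le_div_iff₀ hηpos]
    rw [hC₁def] at hw
    have h2C1 : (0:ℝ) < 2 * C - 1 := by linarith
    refine (mul_le_mul_iff_of_pos_right h2C1).mp ?_
    have hrw : (α * w + C + 1) * η * (2 * C - 1) = (α * w + C + 1) * (2 * C) := by
      rw [mul_assoc, hηeq]
    rw [hrw]
    have hαw : α * w * (2 * C) = 2 * ((C - 1) * w) := by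
      rw [show α * w * (2 * C) = α * C * (2 * w) by ring, hαC]; ring
    nlinarith [hαw, hw]
  -- the events "not yet returned by time n"
  set A : ℕ → Set Ω := fun n => {ω | ∀ i, d ≤ i → i ≤ n → C₁ < W i ω} with hAdef
  have hAmeasF : ∀ n, MeasurableSet[𝓕 n] (A n) := by
    intro n
    have hA : A n = ⋂ i ∈ Finset.Icc d n, {ω | C₁ < W i ω} := by
      ext ω
      simp only [hAdef, Set.mem_setOf_eq, Set.mem_iInter, Finset.mem_Icc]
      exact ⟨fun h i hi => h i hi.1 hi.2, fun h i h1 h2 => h i ⟨h1, h2⟩⟩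
    rw [hA]
    refine Finset.measurableSet_biInter _ (fun i hi => ?_)
    have hi' : i ≤ n := (Finset.mem_Icc.mp hi).2
    exact 𝓕.mono hi' _ (measurableSet_lt measurable_const (hadapt i))
  have hAmeas : ∀ n, MeasurableSet (A n) := fun n => 𝓕.le n _ (hAmeasF n)
  have hAmono : ∀ n, A (n+1) ⊆ A n := by
    intro n ω hω i h1 h2
    exact hω i h1 (le_trans h2 (Nat.le_succ n))
  have hAuniv : ∀ n, n < d → A n = Set.univ := by
    intro n hn
    ext ω
    simp only [hAdef, Set.mem_setOf_eq, Set.mem_univ, iff_true]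
    intro i h1 h2
    omega
  set p : ℕ → ℝ := fun n => (μ (A n)).toReal with hpdef
  set b : ℕ → ℝ := fun n => ∫ ω in A n, W n ω ∂μ with hbdef
  have hbnn : ∀ n, 0 ≤ b n := fun n =>
    setIntegral_nonneg (hAmeas n) (fun ω _ => hnonneg n ω)
  have hpnn : ∀ n, 0 ≤ p n := fun n => ENNReal.toReal_nonneg
  -- the key one-step inequality
  have key : ∀ n, d ≤ n → b (n+1) ≤ b n / η - p n := by
    intro n hdn
    have h1 : b (n+1) ≤ ∫ ω in A n, W (n+1) ω ∂μ := by
      refine setIntegral_mono_set (hint (n+1)).integrableOn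
        (Filter.Eventually.of_forall (fun ω => hnonneg _ ω))
        (Filter.Eventually.of_forall (hAmono n))
    have h2 : ∫ ω in A n, W (n+1) ω ∂μ = ∫ ω in A n, (μ[W (n+1)|𝓕 n]) ω ∂μ :=
      (setIntegral_condExp (𝓕.le n) (hint (n+1)) (hAmeasF n)).symm
    have hdr := hdrift (n+1) (Nat.le_add_left 1 n)
    simp only [Nat.add_sub_cancel] at hdr
    have h3 : ∫ ω in A n, (μ[W (n+1)|𝓕 n]) ω ∂μ
        ≤ ∫ ω in A n, (α * W n ω + C) ∂μ := by
      refine setIntegral_mono_ae integrable_condExp.integrableOn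
        (((hint n).const_mul α).add (integrable_const C)).integrableOn hdr
    have h4 : ∫ ω in A n, (α * W n ω + C) ∂μ
        ≤ ∫ ω in A n, (W n ω / η - 1) ∂μ := by
      refine setIntegral_mono_on
        (((hint n).const_mul α).add (integrable_const C)).integrableOn
        (((hint n).div_const η).sub (integrable_const 1)).integrableOn
        (hAmeas n) ?_
      intro ω hω
      exact hpoint _ (le_of_lt (hω n hdn le_rfl))
    have h5 : ∫ ω in A n, (W n ω / η - 1) ∂μ = b n / η - p n := by
      rw [integral_sub ((hint n).div_const η).integrableOn
        (integrable_const 1).integrableOn]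
      rw [integral_div, setIntegral_const]
      simp [hpdef, hbdef]
      rfl
    linarith [h1, h2.le, h3, h4, h5.le]
  -- partial sums bound
  have hstep : ∀ m : ℕ,
      (∑ k ∈ Finset.range m, η^(d+k) * p (d+k)) + η^(d+m) * b (d+m) ≤ η^d * b d := by
    intro m
    induction m with
    | zero => simp
    | succ m ih =>
      rw [Finset.sum_range_succ]
      have hk := key (d+m) (Nat.le_add_right d m)
      have hpow : (0:ℝ) < η^(d+m+1) := pow_pos hηpos _
      have hb' : η^(d+m+1) * b (d+m+1) ≤ η^(d+m+1) * (b (d+m) / η - p (d+m)) :=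
        mul_le_mul_of_nonneg_left hk (le_of_lt hpow)
      have hrw : η^(d+m+1) * (b (d+m) / η - p (d+m))
          = η^(d+m) * b (d+m) - η^(d+m+1) * p (d+m) := by
        rw [pow_succ]
        field_simp
      rw [hrw] at hb'
      have hple : η^(d+m) * p (d+m) ≤ η^(d+m+1) * p (d+m) :=
        mul_le_mul_of_nonneg_right (pow_le_pow_right₀ hη1.le (Nat.le_succ _)) (hpnn _)
      rw [show d+(m+1) = d+m+1 from rfl]
      linarith [ih, hb', hple]
  have hsum : ∀ m : ℕ, (∑ k ∈ Finset.range m, η^(d+k) * p (d+k)) ≤ η^d * b d := by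
    intro m
    have h1 := hstep m
    have h2 : 0 ≤ η^(d+m) * b (d+m) := mul_nonneg (pow_nonneg (le_of_lt hηpos) _) (hbnn _)
    linarith
  -- expectation bound
  have hEW : ∀ i, ∫ ω, W i ω ∂μ ≤ α^i * C₁ + C^2 := by
    intro i
    induction i with
    | zero =>
      have h0 : ∫ ω, W 0 ω ∂μ ≤ ∫ _, C₁ ∂μ :=
        integral_mono_ae (hint 0) (integrable_const C₁) hW0
      simp only [integral_const, measure_univ, ENNReal.toReal_one, probReal_univ, one_smul] at h0
      simp only [pow_zero, one_mul]
      nlinarith [sq_nonneg C]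
    | succ i ih =>
      have h1 : ∫ ω, W (i+1) ω ∂μ = ∫ ω, (μ[W (i+1)|𝓕 i]) ω ∂μ :=
        (integral_condExp (𝓕.le i)).symm
      have hdr := hdrift (i+1) (Nat.le_add_left 1 i)
      simp only [Nat.add_sub_cancel] at hdr
      have h2 : ∫ ω, (μ[W (i+1)|𝓕 i]) ω ∂μ ≤ ∫ ω, (α * W i ω + C) ∂μ :=
        integral_mono_ae integrable_condExp
          (((hint i).const_mul α).add (integrable_const C)) hdr
      have h3 : ∫ ω, (α * W i ω + C) ∂μ = α * ∫ ω, W i ω ∂μ + C := by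
        rw [integral_add ((hint i).const_mul α) (integrable_const C),
          integral_const_mul, integral_const]
        simp [measure_univ]
      have h4 : α * ∫ ω, W i ω ∂μ ≤ α * (α^i * C₁ + C^2) :=
        mul_le_mul_of_nonneg_left ih hα0
      have h5 : α * C^2 + C = C^2 := by
        rw [hαdef]; field_simp; ring
      have : ∫ ω, W (i+1) ω ∂μ ≤ α * (α^i * C₁ + C^2) + C := by
        rw [h1]; linarith [h2, h3.le, h4]
      calc ∫ ω, W (i+1) ω ∂μ ≤ α * (α^i * C₁ + C^2) + C := this
        _ = α^(i+1) * C₁ + (α * C^2 + C) := by ring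
        _ = α^(i+1) * C₁ + C^2 := by rw [h5]
  have hbd : b d ≤ α^d * C₁ + C^2 := by
    refine le_trans ?_ (hEW d)
    exact setIntegral_le_integral (hint d) (Filter.Eventually.of_forall (fun ω => hnonneg d ω))
  -- indicator functions
  set F : ℕ → Ω → ENNReal := fun n => (A n).indicator (fun _ => ENNReal.ofReal (η^n)) with hFdef
  have hFmeas : ∀ n, Measurable (F n) := fun n => measurable_const.indicator (hAmeas n)
  -- pointwise layer-cake identity
  have hpt : ∀ ω : Ω, (if {i : ℕ | d ≤ i ∧ W i ω ≤ C₁}.Nonempty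
        then ENNReal.ofReal (η ^ sInf {i : ℕ | d ≤ i ∧ W i ω ≤ C₁})
        else ⊤)
      = 1 + ENNReal.ofReal (η - 1) * ∑' n, F n ω := by
    intro ω
    by_cases hS : {i : ℕ | d ≤ i ∧ W i ω ≤ C₁}.Nonempty
    · rw [if_pos hS]
      set k := sInf {i : ℕ | d ≤ i ∧ W i ω ≤ C₁} with hkdef
      have hk : k ∈ {i : ℕ | d ≤ i ∧ W i ω ≤ C₁} := Nat.sInf_mem hS
      have hmem : ∀ n, ω ∈ A n ↔ n < k := by
        intro n
        constructor
        · intro h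
          by_contra hlt
          push_neg at hlt
          exact absurd hk.2 (not_le.mpr (h k hk.1 hlt))
        · intro hnk i hdi hin
          by_contra hle
          push_neg at hle
          have hiS : i ∈ {i : ℕ | d ≤ i ∧ W i ω ≤ C₁} := ⟨hdi, hle⟩
          exact absurd (Nat.sInf_le hiS) (not_le.mpr (lt_of_le_of_lt hin hnk))
      have htsum : (∑' n, F n ω) = ∑ n ∈ Finset.range k, ENNReal.ofReal (η^n) := by
        rw [tsum_eq_sum (s := Finset.range k) ?h]
        · refine Finset.sum_congr rfl (fun n hn => ?_)
          exact Set.indicator_of_mem ((hmem n).mpr (Finset.mem_range.mp hn)) _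
        · intro n hn
          exact Set.indicator_of_notMem
            (fun h => hn (Finset.mem_range.mpr ((hmem n).mp h))) _
      rw [htsum, ← ENNReal.ofReal_sum_of_nonneg
        (fun n _ => pow_nonneg hηpos.le n)]
      rw [geom_sum_eq (ne_of_gt hη1)]
      rw [← ENNReal.ofReal_mul (by linarith : (0:ℝ) ≤ η - 1)]
      have hηk1 : (1:ℝ) ≤ η^k := one_le_pow₀ hη1.le
      have hmul : (η - 1) * ((η^k - 1) / (η - 1)) = η^k - 1 :=
        mul_div_cancel₀ _ (by linarith : η - 1 ≠ 0)
      rw [hmul, show (1:ENNReal) = ENNReal.ofReal 1 by simp,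
        ← ENNReal.ofReal_add (by norm_num) (by linarith : (0:ℝ) ≤ η^k - 1)]
      norm_num
    · rw [if_neg hS]
      have hall : ∀ n, ω ∈ A n := by
        intro n i hdi hin
        by_contra hle
        push_neg at hle
        exact hS ⟨i, hdi, hle⟩
      have htop : (∑' n, F n ω) = ⊤ := by
        refine top_unique ?_
        calc (⊤:ENNReal) = ∑' (_:ℕ), (1:ENNReal) :=
              (ENNReal.tsum_const_eq_top_of_ne_zero one_ne_zero).symm
          _ ≤ ∑' n, F n ω := by
              refine ENNReal.tsum_le_tsum (fun n => ?_)
              rw [hFdef]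
              simp only [Set.indicator_of_mem (hall n)]
              rw [show (1:ENNReal) = ENNReal.ofReal 1 by simp]
              exact ENNReal.ofReal_le_ofReal (one_le_pow₀ hη1.le)
      have hne : ENNReal.ofReal (η - 1) ≠ 0 := by
        simp only [ne_eq, ENNReal.ofReal_eq_zero, not_le]
        linarith
      rw [htop, ENNReal.mul_top hne]
      simp
  -- compute the lintegral
  have hlin : (∫⁻ ω, (if {i : ℕ | d ≤ i ∧ W i ω ≤ C₁}.Nonempty
        then ENNReal.ofReal (η ^ sInf {i : ℕ | d ≤ i ∧ W i ω ≤ C₁})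
        else ⊤) ∂μ)
      = 1 + ENNReal.ofReal (η - 1) * ∑' n, ENNReal.ofReal (η^n) * μ (A n) := by
    rw [lintegral_congr hpt, lintegral_add_left measurable_const]
    simp only [lintegral_const, measure_univ, one_mul]
    congr 1
    rw [lintegral_const_mul _ (Measurable.ennreal_tsum hFmeas)]
    congr 1
    rw [lintegral_tsum (fun n => (hFmeas n).aemeasurable)]
    refine tsum_congr (fun n => ?_)
    simp only [hFdef]
    rw [lintegral_indicator (hAmeas n), setLIntegral_const]
  -- bound the tail sum
  have htail : (∑' n, ENNReal.ofReal (η^n) * μ (A n)) ≤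
      ENNReal.ofReal ((∑ n ∈ Finset.range d, η^n) + η^d * (α^d * C₁ + C^2)) := by
    rw [ENNReal.tsum_eq_iSup_nat]
    refine iSup_le (fun m => ?_)
    refine le_trans (Finset.sum_le_sum_of_subset
      (Finset.range_subset_range.mpr (Nat.le_add_left m d))) ?_
    rw [Finset.sum_range_add]
    have h1 : ∑ n ∈ Finset.range d, ENNReal.ofReal (η^n) * μ (A n)
        = ENNReal.ofReal (∑ n ∈ Finset.range d, η^n) := by
      rw [ENNReal.ofReal_sum_of_nonneg (fun n _ => pow_nonneg hηpos.le n)]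
      refine Finset.sum_congr rfl (fun n hn => ?_)
      rw [hAuniv n (Finset.mem_range.mp hn), measure_univ, mul_one]
    have htermnn : ∀ k, 0 ≤ η^(d+k) * p (d+k) :=
      fun k => mul_nonneg (pow_nonneg hηpos.le _) (hpnn _)
    have hterm : ∀ k, ENNReal.ofReal (η^(d+k)) * μ (A (d+k))
        = ENNReal.ofReal (η^(d+k) * p (d+k)) := by
      intro k
      rw [ENNReal.ofReal_mul (pow_nonneg hηpos.le _)]
      simp only [hpdef]
      rw [ENNReal.ofReal_toReal (measure_ne_top μ _)]
    have h2 : (∑ k ∈ Finset.range m, ENNReal.ofReal (η^(d+k)) * μ (A (d+k)))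
        ≤ ENNReal.ofReal (η^d * (α^d * C₁ + C^2)) := by
      calc (∑ k ∈ Finset.range m, ENNReal.ofReal (η^(d+k)) * μ (A (d+k)))
          = ∑ k ∈ Finset.range m, ENNReal.ofReal (η^(d+k) * p (d+k)) :=
            Finset.sum_congr rfl (fun k _ => hterm k)
        _ = ENNReal.ofReal (∑ k ∈ Finset.range m, η^(d+k) * p (d+k)) :=
            (ENNReal.ofReal_sum_of_nonneg (fun k _ => htermnn k)).symm
        _ ≤ ENNReal.ofReal (η^d * b d) := ENNReal.ofReal_le_ofReal (hsum m)
        _ ≤ ENNReal.ofReal (η^d * (α^d * C₁ + C^2)) :=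
            ENNReal.ofReal_le_ofReal
              (mul_le_mul_of_nonneg_left hbd (pow_nonneg hηpos.le _))
    refine le_trans (add_le_add h1.le h2) ?_
    rw [← ENNReal.ofReal_add
      (Finset.sum_nonneg (fun n _ => pow_nonneg hηpos.le n))
      (mul_nonneg (pow_nonneg hηpos.le _)
        (add_nonneg (mul_nonneg (pow_nonneg hα0 _) hC₁pos.le) (sq_nonneg C)))]
  -- final arithmetic
  rw [hlin]
  refine le_trans (add_le_add_right (mul_le_mul_right htail _) 1) ?_
  have hXnn : (0:ℝ) ≤ (∑ n ∈ Finset.range d, η^n) + η^d * (α^d * C₁ + C^2) :=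
    add_nonneg (Finset.sum_nonneg (fun n _ => pow_nonneg hηpos.le n))
      (mul_nonneg (pow_nonneg hηpos.le _)
        (add_nonneg (mul_nonneg (pow_nonneg hα0 _) hC₁pos.le) (sq_nonneg C)))
  rw [← ENNReal.ofReal_mul (by linarith : (0:ℝ) ≤ η - 1),
    show (1:ENNReal) = ENNReal.ofReal 1 by simp,
    ← ENNReal.ofReal_add (by norm_num)
      (mul_nonneg (by linarith : (0:ℝ) ≤ η - 1) hXnn)]
  refine ENNReal.ofReal_le_ofReal ?_
  have hgeo : ∑ n ∈ Finset.range d, η^n = (η^d - 1) / (η - 1) :=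
    geom_sum_eq (ne_of_gt hη1) d
  have hgd : (η - 1) * ((η^d - 1) / (η - 1)) = η^d - 1 :=
    mul_div_cancel₀ _ (by linarith : η - 1 ≠ 0)
  rw [hgeo, mul_add, hgd]
  have h2C1 : (0:ℝ) < 2*C - 1 := by linarith
  have hη2 : (η - 1) * (2*C - 1) = 1 := by linear_combination hηeq
  have hαd : α^d ≤ α := pow_le_of_le_one hα0 hα1.le (by omega)
  have hcore : (η - 1) * (α^d * C₁ + C^2) ≤ C^2 + (C - 1) * C₁ := by
    have h1 : (η - 1) * (α^d * C₁ + C^2) ≤ (η - 1) * (α * C₁ + C^2) := by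
      refine mul_le_mul_of_nonneg_left ?_ (by linarith)
      nlinarith [hαd, hC₁pos]
    refine le_trans h1 ?_
    have heval : η - 1 = 1 / (2*C - 1) := by
      rw [eq_div_iff (ne_of_gt h2C1)]; exact hη2
    have hαC₁ : α * C₁ = (C - 1) * (2*C + 2) := by
      rw [hC₁def, show α * (C * (2*C + 2)) = (α * C) * (2*C + 2) by ring, hαC]
    rw [heval, hαC₁, hC₁def, div_mul_eq_mul_div, div_le_iff₀ h2C1]
    have hcc : (0:ℝ) ≤ (C - 1) * (4*C^3 + 4*C^2 - 4*C - 2) := by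
      have h3 : (0:ℝ) ≤ 4*C^3 + 4*C^2 - 4*C - 2 := by nlinarith [hC, sq_nonneg C]
      exact mul_nonneg (by linarith) h3
    nlinarith [hcc]
  have hηd : (0:ℝ) < η^d := pow_pos hηpos d
  nlinarith [mul_le_mul_of_nonneg_left hcore (le_of_lt hηd)]
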